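/- Let C be a d-dimensional Latin hypercube of length 2 (i.e. C : [2]^d → [2^{d-1}] with each slice a permutation). Then for every cell a ∈ [2]^d, C(a) = C(ā), where ā is the coordinatewise complement of a (i.e. ā_i = 3 − a_i). -/
import Mathlib


open scoped Classical

namespace AT

/-- Lexicographic strict order on cells of `[k]^d`. -/
def cellLt {d k : ℕ} (a b : Fin d → Fin k) : Prop :=
  ∃ i : Fin d, (∀ j : Fin d, j < i → a j = b j) ∧ a i < b i

/-- Number of inversions of the values of `C` (blanks coded by `0`) in the slice of
direction `ℓ` with coordinate `j`, cells compared in lexicographic order. -/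
noncomputable def sliceInv {d k : ℕ} (C : (Fin d → Fin k) → ℕ) (ℓ : Fin d) (j : Fin k) : ℕ :=
  Set.ncard {p : (Fin d → Fin k) × (Fin d → Fin k) |
    p.1 ℓ = j ∧ p.2 ℓ = j ∧ cellLt p.1 p.2 ∧ C p.2 ≠ 0 ∧ C p.2 < C p.1}

/-- Directional sign: product over the slices in direction `ℓ` of the signs of the
slice permutations (computed as `(-1)^inversions`). -/
noncomputable def dirSgn {d k : ℕ} (C : (Fin d → Fin k) → ℕ) (ℓ : Fin d) : ℤ :=
  ∏ j : Fin k, (-1 : ℤ) ^ sliceInv C ℓ j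

/-- Full sign of a (partial) Latin hypercube. -/
noncomputable def fullSgn {d k : ℕ} (C : (Fin d → Fin k) → ℕ) : ℤ :=
  ∏ ℓ : Fin d, dirSgn C ℓ

/-- `C` is a `d`-dimensional Latin hypercube of length `k` with values in `[n]`:
every value of `[n]` occurs exactly once in every slice. -/
def IsLatin (d k n : ℕ) (C : (Fin d → Fin k) → ℕ) : Prop :=
  (∀ a, 1 ≤ C a ∧ C a ≤ n) ∧
  ∀ (ℓ : Fin d) (j : Fin k) (v : ℕ), 1 ≤ v → v ≤ n →
    ∃! a : Fin d → Fin k, a ℓ = j ∧ C a = v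

end AT

/-- In a `d`-dimensional Latin hypercube of length `2`, the value at any
cell equals the value at the coordinatewise complementary cell. -/
theorem latin_length_two_complement (d : ℕ) (C : (Fin d → Fin 2) → ℕ)
    (hC : AT.IsLatin d 2 (2 ^ (d - 1)) C) (a : Fin d → Fin 2) :
    C a = C (fun i => 1 - a i) := by
  rcases Nat.eq_zero_or_pos d with hd | hd
  · subst hd
    congr 1
    funext i
    exact i.elim0
  · obtain ⟨hbound, huniq⟩ := hC
    obtain ⟨h1, h2⟩ := hbound a
    obtain ⟨b, ⟨hb1, hb2⟩, hbu⟩ := huniq ⟨0, hd⟩ (1 - a ⟨0, hd⟩) (C a) h1 h2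
    have hne : b ≠ a := by
      intro h
      subst h
      have hx : ∀ x : Fin 2, ¬ (x = 1 - x) := by decide
      exact hx _ hb1
    have key : ∀ ℓ, b ℓ = 1 - a ℓ := by
      intro ℓ
      by_contra hne2
      obtain ⟨c, _, hcu⟩ := huniq ℓ (a ℓ) (C a) h1 h2
      have hca : a = c := hcu a ⟨rfl, rfl⟩
      have hba : b ℓ = a ℓ := by
        have hx : ∀ x y : Fin 2, ¬ (x = 1 - y) → x = y := by decide
        exact hx _ _ hne2
      have hbc : b = c := hcu b ⟨hba, hb2⟩
      exact hne (hbc.trans hca.symm)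
    have hb : (fun i => 1 - a i) = b := funext fun i => (key i).symm
    rw [hb, hb2]
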